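/- Let (ℒ, 𝒜) be a complete duality pair over a commutative ring R. Then every module in ℒ is right-orthogonal to the Gorenstein (ℒ,𝒜)-projective modules: for every L ∈ ℒ and every Gorenstein (ℒ,𝒜)-projective R-module G, Ext¹_R(G, L) = 0. In particular, Ext¹_R(G, F) = 0 for every flat R-module F. -/

import Mathlib

open CategoryTheory

universe w u

/-- The character module `M⁺ = Hom_ℤ(M, ℚ/ℤ)` of `M`, as an object of `ModuleCat R`
(with the `R`-action `(r • f) x = f (r • x)`). -/
noncomputable def charMod (R : Type u) [CommRing R] (M : ModuleCat.{u} R) : ModuleCat.{u} R :=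
  ModuleCat.of R (CharacterModule M)

/-- `(𝓜, 𝓒)` is a duality pair over `R`: both classes are closed under isomorphism,
`M ∈ 𝓜 ↔ M⁺ ∈ 𝓒`, and `𝓒` is closed under direct summands and finite direct sums. -/
structure IsDualityPair (R : Type u) [CommRing R]
    (Mc Cc : ModuleCat.{u} R → Prop) : Prop where
  isoClosed_fst : ∀ {A B : ModuleCat.{u} R}, (A ≅ B) → Mc A → Mc B
  isoClosed_snd : ∀ {A B : ModuleCat.{u} R}, (A ≅ B) → Cc A → Cc B
  char_mem_iff : ∀ M : ModuleCat.{u} R, Mc M ↔ Cc (charMod R M)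
  summand_closed : ∀ A B : ModuleCat.{u} R, Cc (ModuleCat.of R (A × B)) → Cc A
  finSum_closed : ∀ A B : ModuleCat.{u} R, Cc A → Cc B → Cc (ModuleCat.of R (A × B))

/-- A duality pair `(𝓜, 𝓒)` is perfect if `R ∈ 𝓜` and `𝓜` is closed under arbitrary
direct sums and under extensions. -/
structure IsPerfectDualityPair (R : Type u) [CommRing R]
    (Mc Cc : ModuleCat.{u} R → Prop) extends IsDualityPair R Mc Cc : Prop where
  self_mem : Mc (ModuleCat.of R R)
  directSum_closed : ∀ (ι : Type u) (A : ι → ModuleCat.{u} R),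
    (∀ i, Mc (A i)) → Mc (ModuleCat.of R (DirectSum ι (fun i => A i)))
  extension_closed : ∀ S : ShortComplex (ModuleCat.{u} R),
    S.ShortExact → Mc S.X₁ → Mc S.X₃ → Mc S.X₂

/-- `(ℒ, 𝒜)` is a complete duality pair: `{ℒ, 𝒜}` is a symmetric duality pair
with `(ℒ, 𝒜)` perfect. -/
structure IsCompleteDualityPair (R : Type u) [CommRing R]
    (Lc Ac : ModuleCat.{u} R → Prop) : Prop where
  perfect : IsPerfectDualityPair R Lc Ac
  snd : IsDualityPair R Ac Lc

/-- The complex of abelian groups `Hom_R(X, M)` induced by a chain complex `X`. -/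
noncomputable def homToComplex (R : Type u) [CommRing R]
    (X : ChainComplex (ModuleCat.{u} R) ℤ) (M : ModuleCat.{u} R) :
    HomologicalComplex AddCommGrpCat.{u} (ComplexShape.down ℤ).symm :=
  ((preadditiveYoneda.obj M).mapHomologicalComplex _).obj X.op

/-- A complex is exact if its homology vanishes in every degree. -/
def ComplexExact {V : Type*} [Category V] [Limits.HasZeroMorphisms V] {ι : Type*}
    {c : ComplexShape ι} (X : HomologicalComplex V c) : Prop :=
  ∀ n, X.ExactAt n

/-- `M` is Gorenstein `(ℒ,𝒜)`-projective: `M ≅ Z₀P` for some exact complex `P` of projectives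
such that `Hom_R(P, L)` is exact for all `L ∈ ℒ`. -/
def IsGorensteinProjective (R : Type u) [CommRing R]
    (Lc : ModuleCat.{u} R → Prop) (M : ModuleCat.{u} R) : Prop :=
  ∃ P : ChainComplex (ModuleCat.{u} R) ℤ,
    (∀ n, Projective (P.X n)) ∧ ComplexExact P ∧
      (∀ L, Lc L → ComplexExact (homToComplex R P L)) ∧
      Nonempty (M ≅ P.cycles 0)

/-- The first `Ext` group `Ext¹_R(M, N)` of `R`-modules. -/
noncomputable def ext1 (R : Type u) [CommRing R] (M N : ModuleCat.{u} R) : ModuleCat.{u} R :=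
  ((_root_.Ext R (ModuleCat.{u} R) 1).obj (Opposite.op M)).obj N

/-- `Ext¹_R(M, N) = 0`. -/
def Ext1Vanishes (R : Type u) [CommRing R] (M N : ModuleCat.{u} R) : Prop :=
  Subsingleton (ext1 R M N)



namespace DPProofAux
open CategoryTheory Limits HomologicalComplex
variable {R : Type u} [CommRing R]


lemma exactAt_iff_mod {ι : Type*} {c : ComplexShape ι} (X : HomologicalComplex (ModuleCat.{u} R) c)
    (i j k : ι) (hi : c.prev j = i) (hk : c.next j = k) :
    X.ExactAt j ↔ ∀ x : X.X j, X.d j k x = 0 → ∃ y : X.X i, X.d i j y = x := by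
  rw [X.exactAt_iff' i j k hi hk, ShortComplex.moduleCat_exact_iff]
  rfl

lemma exactAt_iff_ab {ι : Type*} {c : ComplexShape ι} (X : HomologicalComplex AddCommGrpCat.{u} c)
    (i j k : ι) (hi : c.prev j = i) (hk : c.next j = k) :
    X.ExactAt j ↔ ∀ x : X.X j, X.d j k x = 0 → ∃ y : X.X i, X.d i j y = x := by
  rw [X.exactAt_iff' i j k hi hk, ShortComplex.ab_exact_iff]
  rfl

noncomputable def resComplex (P : ChainComplex (ModuleCat.{u} R) ℤ) :
    ChainComplex (ModuleCat.{u} R) ℕ :=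
  ChainComplex.of (fun n => P.X (n + 1)) (fun n => P.d (n + 1 + 1) (n + 1))
    (fun n => P.d_comp_d _ _ _)

noncomputable def resPi (P : ChainComplex (ModuleCat.{u} R) ℤ) :
    resComplex P ⟶ (ChainComplex.single₀ (ModuleCat.{u} R)).obj (P.cycles 0) :=
  (ChainComplex.toSingle₀Equiv _ _).symm
    ⟨P.toCycles 1 0, by
      have : (resComplex P).d 1 0 = P.d 2 1 := ChainComplex.of_d (fun n => P.X (n + 1)) (fun n => P.d (n + 1 + 1) (n + 1)) 0
      rw [this]
      exact P.d_toCycles 2 1 0⟩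

lemma resPi_f_zero (P : ChainComplex (ModuleCat.{u} R) ℤ) :
    (resPi P).f 0 = P.toCycles 1 0 := ChainComplex.toSingle₀Equiv_symm_apply_f_zero _ _

lemma resExactAt (P : ChainComplex (ModuleCat.{u} R) ℤ) (hex : ∀ n : ℤ, P.ExactAt n) (n : ℕ) :
    (resComplex P).ExactAt (n + 1) := by
  rw [exactAt_iff_mod _ (n+2) (n+1) n (ComplexShape.prev_eq' _ rfl) (ComplexShape.next_eq' _ rfl)]
  intro x hx
  have hP := (exactAt_iff_mod P (n+1+1+1) (n+1+1) (n+1)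
    (ComplexShape.prev_eq' _ rfl) (ComplexShape.next_eq' _ rfl)).mp (hex _)
  have e1 : (resComplex P).d (n+1) n = P.d (n+1+1) (n+1) := ChainComplex.of_d (fun m : ℕ => P.X (m + 1)) (fun m : ℕ => P.d (m + 1 + 1) (m + 1)) n
  have e2 : (resComplex P).d (n+2) (n+1) = P.d (n+1+1+1) (n+1+1) := ChainComplex.of_d (fun m : ℕ => P.X (m + 1)) (fun m : ℕ => P.d (m + 1 + 1) (m + 1)) (n+1)
  rw [e1] at hx
  obtain ⟨y, hy⟩ := hP x hx
  exact ⟨y, by rw [e2]; exact hy⟩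

lemma resQuasiIsoAt0 (P : ChainComplex (ModuleCat.{u} R) ℤ) (hex : ∀ n : ℤ, P.ExactAt n) :
    QuasiIsoAt (resPi P) 0 := by
  rw [ChainComplex.quasiIsoAt₀_iff, ShortComplex.quasiIso_iff_of_zeros']
  rotate_left
  · exact (resComplex P).shape 0 0 (by simp)
  · rfl
  · rfl
  constructor
  · rw [ShortComplex.moduleCat_exact_iff]
    intro x hx
    replace hx : P.toCycles 1 0 x = 0 := by rw [← resPi_f_zero P]; exact hx
    have hx' : P.d 1 0 x = 0 := by
      have h1 : P.iCycles 0 (P.toCycles 1 0 x) = (P.toCycles 1 0 ≫ P.iCycles 0) x := rfl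
      rw [← P.toCycles_i 1 0]
      show (P.toCycles 1 0 ≫ P.iCycles 0) x = 0
      rw [← h1, hx, map_zero]
    obtain ⟨y, hy⟩ := (exactAt_iff_mod P 2 1 0 (ComplexShape.prev_eq' _ rfl)
      (ComplexShape.next_eq' _ rfl)).mp (hex 1) x hx'
    refine ⟨y, ?_⟩
    show (resComplex P).d 1 0 y = x
    rw [show (resComplex P).d 1 0 = P.d 2 1 from ChainComplex.of_d (fun n => P.X (n + 1)) (fun n => P.d (n + 1 + 1) (n + 1)) 0]
    exact hy
  · have : Epi (P.toCycles 1 0) := by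
      rw [ModuleCat.epi_iff_surjective]
      intro z
      have hz : P.d 0 (-1) (P.iCycles 0 z) = 0 := by
        show (P.iCycles 0 ≫ P.d 0 (-1)) z = 0
        rw [P.iCycles_d 0 (-1)]
        rfl
      obtain ⟨y, hy⟩ := (exactAt_iff_mod P 1 0 (-1) (ComplexShape.prev_eq' _ rfl)
        (ComplexShape.next_eq' _ (by decide))).mp (hex 0) _ hz
      refine ⟨y, (ModuleCat.mono_iff_injective (P.iCycles 0)).mp inferInstance ?_⟩
      show (P.toCycles 1 0 ≫ P.iCycles 0) y = P.iCycles 0 z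
      rw [P.toCycles_i 1 0]
      exact hy
    rw [show ((shortComplexFunctor' (ModuleCat.{u} R) (ComplexShape.down ℕ) 1 0 0).map
      (resPi P)).τ₂ = (resPi P).f 0 from rfl, resPi_f_zero]
    exact this

noncomputable def resOf (P : ChainComplex (ModuleCat.{u} R) ℤ) (hproj : ∀ n, Projective (P.X n))
    (hex : ∀ n : ℤ, P.ExactAt n) {G : ModuleCat.{u} R} (e : G ≅ P.cycles 0) :
    ProjectiveResolution G where
  complex := resComplex P
  projective n := hproj _
  π := resPi P ≫ (ChainComplex.single₀ (ModuleCat.{u} R)).map e.inv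
  quasiIso := by
    have hq : QuasiIso (resPi P) := ⟨fun i => by
      cases i with
      | zero => exact resQuasiIsoAt0 P hex
      | succ n => exact (quasiIsoAt_iff_exactAt' _ _
          (ChainComplex.exactAt_succ_single_obj _ n)).mpr (resExactAt P hex n)⟩
    infer_instance


lemma hom_ext_surj (P : ChainComplex (ModuleCat.{u} R) ℤ) (L : ModuleCat.{u} R)
    (hL : ∀ n : ℤ, (homToComplex R P L).ExactAt n)
    (g : P.X 2 ⟶ L) (hg : P.d 3 2 ≫ g = 0) : ∃ f : P.X 1 ⟶ L, P.d 2 1 ≫ f = g := by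
  have h2 := (exactAt_iff_ab (homToComplex R P L) 1 2 3 (ComplexShape.prev_eq' _ rfl)
    (ComplexShape.next_eq' _ rfl)).mp (hL 2)
  exact h2 g hg

lemma ext1_subsingleton (P : ChainComplex (ModuleCat.{u} R) ℤ)
    (hproj : ∀ n, Projective (P.X n)) (hex : ∀ n : ℤ, P.ExactAt n)
    {L : ModuleCat.{u} R} (hL : ∀ n : ℤ, (homToComplex R P L).ExactAt n)
    {G : ModuleCat.{u} R} (e : G ≅ P.cycles 0) : Subsingleton (ext1 R G L) := by
  have hiso : ext1 R G L ≅ ((resComplex P).linearYonedaObj R L).homology 1 :=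
    (resOf P hproj hex e).isoExt 1 L
  have hexact : ((resComplex P).linearYonedaObj R L).ExactAt 1 := by
    rw [exactAt_iff_mod _ 0 1 2 (ComplexShape.prev_eq' _ rfl) (ComplexShape.next_eq' _ rfl)]
    intro x hx
    have hx' : (resComplex P).d 2 1 ≫ x = 0 := hx
    rw [show (resComplex P).d 2 1 = P.d 3 2 from ChainComplex.of_d (fun n => P.X (n + 1)) (fun n => P.d (n + 1 + 1) (n + 1)) 1] at hx'
    obtain ⟨f, hf⟩ := hom_ext_surj P L hL x hx'
    refine ⟨f, ?_⟩
    show (resComplex P).d 1 0 ≫ f = x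
    rw [show (resComplex P).d 1 0 = P.d 2 1 from ChainComplex.of_d (fun n => P.X (n + 1)) (fun n => P.d (n + 1 + 1) (n + 1)) 0]
    exact hf
  have hzero : IsZero (((resComplex P).linearYonedaObj R L).homology 1) :=
    ((resComplex P).linearYonedaObj R L).exactAt_iff_isZero_homology 1 |>.mp hexact
  have hsub : Subsingleton (((resComplex P).linearYonedaObj R L).homology 1 :
      ModuleCat.{u} R) := by
    have h0 : (𝟙 (((resComplex P).linearYonedaObj R L).homology 1) :
        _ ⟶ _) = 0 := hzero.eq_of_src _ _
    refine ⟨fun a b => ?_⟩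
    have ha : a = (𝟙 (((resComplex P).linearYonedaObj R L).homology 1) : _ ⟶ _) a := rfl
    have hb : b = (𝟙 (((resComplex P).linearYonedaObj R L).homology 1) : _ ⟶ _) b := rfl
    rw [ha, hb, h0]
    rfl
  exact ((CategoryTheory.forget (ModuleCat.{u} R)).mapIso hiso).toEquiv.subsingleton

end DPProofAux

namespace DPFlatAux
open CategoryTheory
variable {R : Type u} [CommRing R]

lemma splitting {X Y : Type u} [AddCommGroup X] [AddCommGroup Y] [Module R X] [Module R Y]
    (i : X →ₗ[R] Y) (r : Y →ₗ[R] X) (hr : ∀ x, r (i x) = x) :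
    Nonempty (Y ≃ₗ[R] X × (LinearMap.ker r)) := by
  refine ⟨{ toFun := fun y => (r y, ⟨y - i (r y), by simp [LinearMap.mem_ker, hr]⟩),
            invFun := fun p => i p.1 + p.2.1,
            map_add' := fun a b => ?_, map_smul' := fun c a => ?_,
            left_inv := fun y => by simp, right_inv := fun p => ?_ }⟩
  · refine Prod.ext (by simp) (Subtype.ext ?_)
    show (a + b) - i (r (a + b)) = (a - i (r a)) + (b - i (r b))
    rw [map_add, map_add]
    abel
  · refine Prod.ext (by simp) (Subtype.ext ?_)
    show (c • a) - i (r (c • a)) = c • (a - i (r a))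
    rw [map_smul, map_smul, smul_sub]
  · obtain ⟨x, k, hk⟩ := p
    rw [LinearMap.mem_ker] at hk
    refine Prod.ext (by simp [hr, hk]) (Subtype.ext ?_)
    show (i x + k) - i (r (i x + k)) = k
    rw [map_add, hr, hk, add_zero]
    abel

lemma flat_mem_L (Lc Ac : ModuleCat.{u} R → Prop) (h : IsCompleteDualityPair R Lc Ac)
    (F : ModuleCat.{u} R) (hF : Module.Flat R F) : Lc F := by
  classical
  have hFree : Lc (ModuleCat.of R (DirectSum (F : Type u)
      (fun _ => ((ModuleCat.of R R : ModuleCat.{u} R) : Type u)))) :=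
    h.perfect.directSum_closed (F : Type u) (fun _ => ModuleCat.of R R)
      (fun _ => h.perfect.self_mem)
  set Free : ModuleCat.{u} R := ModuleCat.of R (DirectSum (F : Type u)
      (fun _ => ((ModuleCat.of R R : ModuleCat.{u} R) : Type u))) with hFreeDef
  let π : (Free : Type u) →ₗ[R] (F : Type u) :=
    DirectSum.toModule R (F : Type u) (F : Type u)
      (fun x => LinearMap.toSpanSingleton R (F : Type u) x)
  have hπ : Function.Surjective π := by
    intro x
    refine ⟨DirectSum.lof R (F : Type u)
      (fun _ => ((ModuleCat.of R R : ModuleCat.{u} R) : Type u)) x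
      (show ((ModuleCat.of R R : ModuleCat.{u} R) : Type u) from (1 : R)), ?_⟩
    show DirectSum.toModule R (F : Type u) (F : Type u) _ _ = x
    rw [DirectSum.toModule_lof]
    exact one_smul R x
  let i : CharacterModule (F : Type u) →ₗ[R] CharacterModule (Free : Type u) :=
    CharacterModule.dual π
  have hi : Function.Injective i := by
    intro c c' hcc
    ext x
    obtain ⟨y, rfl⟩ := hπ x
    exact DFunLike.congr_fun hcc y
  obtain ⟨r, hr⟩ := (Module.Flat.iff_characterModule_baer.mp hF).extension_property i hi
    LinearMap.id
  have hr' : ∀ x, r (i x) = x := fun x => DFunLike.congr_fun hr x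
  obtain ⟨eqv⟩ := splitting i r hr'
  have hAcFree : Ac (charMod R Free) := (h.perfect.char_mem_iff Free).mp hFree
  have hiso : charMod R Free ≅ ModuleCat.of R
      (((charMod R F : Type u)) × (((ModuleCat.of R (LinearMap.ker r)) : Type u))) :=
    eqv.toModuleIso
  have hAcProd := h.perfect.isoClosed_snd hiso hAcFree
  exact (h.perfect.char_mem_iff F).mpr
    (h.perfect.summand_closed (charMod R F) (ModuleCat.of R (LinearMap.ker r)) hAcProd)

end DPFlatAux

/-- For a complete duality pair `(ℒ, 𝒜)`, every module in `ℒ` is right-orthogonal to the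
Gorenstein `(ℒ,𝒜)`-projective modules; in particular so is every flat module. -/
theorem ext_vanishes_of_gorensteinProjective_of_mem_L
    (R : Type u) [CommRing R] (Lc Ac : ModuleCat.{u} R → Prop)
    (h : IsCompleteDualityPair R Lc Ac) :
    (∀ L : ModuleCat.{u} R, Lc L → ∀ G : ModuleCat.{u} R,
      IsGorensteinProjective R Lc G → Ext1Vanishes R G L) ∧
    (∀ G : ModuleCat.{u} R, IsGorensteinProjective R Lc G →
      ∀ F : ModuleCat.{u} R, Module.Flat R F → Ext1Vanishes R G F) := by
  classical
  have part1 : ∀ L : ModuleCat.{u} R, Lc L → ∀ G : ModuleCat.{u} R,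
      IsGorensteinProjective R Lc G → Ext1Vanishes R G L := by
    intro L hL G hG
    obtain ⟨P, hproj, hex, hhom, ⟨e⟩⟩ := hG
    exact DPProofAux.ext1_subsingleton P hproj hex (hhom L hL) e
  refine ⟨part1, ?_⟩
  intro G hG F hF
  exact part1 F (DPFlatAux.flat_mem_L Lc Ac h F hF) G hG
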